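/- Call a pair (η, ω) with η ∈ {0,1}^L and ω = (ω^(1),…,ω^(N)) ∈ (S_L)^N valid if ω^(n) ∈ Ω^(n)(η) for every n = 1,…,N. Define an elementary move from a valid state (η, ω) to a valid state (η', ω') to be either (i) η' differs from η in exactly one coordinate and ω' = ω, or (ii) η' = η and ω' differs from ω only in one component ω'^(n) ∈ Ω^(n)(η). Then any valid state can be transformed into any other valid state by a finite sequence of elementary moves passing only through valid states (the reflexive-transitive closure of the elementary-move relation relates any two valid states). -/

import Mathlib

/-- `‖η‖₁`: the number of ones in an existence list `η ∈ {0,1}^L`. -/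
def normOne {L : ℕ} (η : Fin L → Bool) : ℕ :=
  (Finset.univ.filter (fun ℓ => η ℓ = true)).card

/-- `π` is an existence assignment between `η` and `ξ`. -/
def IsExistenceAssignment {L : ℕ} (ξ : Fin L → Bool) (η : Fin L → Bool)
    (π : Equiv.Perm (Fin L)) : Prop :=
  if normOne η ≤ normOne ξ then ∀ ℓ, η ℓ = true → ξ (π ℓ) = true
  else ∀ ℓ, ξ (π ℓ) = true → η ℓ = true

/-- A state `(η, ω)` is valid if `ω^(n) ∈ Ω^(n)(η)` for every `n`. -/
def ValidState {L N : ℕ} (ξ : Fin N → Fin L → Bool)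
    (s : (Fin L → Bool) × (Fin N → Equiv.Perm (Fin L))) : Prop :=
  ∀ n, IsExistenceAssignment (ξ n) s.1 (s.2 n)

/-- Elementary move between valid states: either (i) flip exactly one coordinate of the
existence list keeping the assignments, or (ii) keep the existence list and change the
assignment in at most one component. -/
def ElementaryMove {L N : ℕ} (ξ : Fin N → Fin L → Bool)
    (s s' : (Fin L → Bool) × (Fin N → Equiv.Perm (Fin L))) : Prop :=
  ValidState ξ s ∧ ValidState ξ s' ∧
    ((∃ ℓ₀ : Fin L, s'.1 ℓ₀ ≠ s.1 ℓ₀ ∧ (∀ ℓ, ℓ ≠ ℓ₀ → s'.1 ℓ = s.1 ℓ) ∧ s'.2 = s.2) ∨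
      (s'.1 = s.1 ∧ ∃ n₀ : Fin N, ∀ n, n ≠ n₀ → s'.2 n = s.2 n))

lemma em_symm {L N : ℕ} (ξ : Fin N → Fin L → Bool)
    {a b : (Fin L → Bool) × (Fin N → Equiv.Perm (Fin L))}
    (h : ElementaryMove ξ a b) : ElementaryMove ξ b a := by
  obtain ⟨h1, h2, h3⟩ := h
  refine ⟨h2, h1, ?_⟩
  rcases h3 with ⟨ℓ₀, hne, hoth, heq⟩ | ⟨heq, n₀, hoth⟩
  · exact Or.inl ⟨ℓ₀, hne.symm, fun ℓ hℓ => (hoth ℓ hℓ).symm, heq.symm⟩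
  · exact Or.inr ⟨heq.symm, n₀, fun n hn => (hoth n hn).symm⟩

lemma isEA_zero {L : ℕ} (ξ : Fin L → Bool) (π : Equiv.Perm (Fin L)) :
    IsExistenceAssignment ξ (fun _ => false) π := by
  unfold IsExistenceAssignment normOne
  simp

/-- A permutation mapping one finset into another of at least its size. -/
lemma perm_maps {L : ℕ} (A B : Finset (Fin L)) (h : A.card ≤ B.card) :
    ∃ π : Equiv.Perm (Fin L), ∀ a ∈ A, π a ∈ B := by
  obtain ⟨C, hCB, hC⟩ := Finset.exists_subset_card_eq h
  have e : {x // x ∈ A} ≃ {x // x ∈ C} := Finset.equivOfCardEq hC.symm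
  refine ⟨e.extendSubtype, fun a ha => hCB ?_⟩
  exact e.extendSubtype_mem a ha

lemma filter_update_false {L : ℕ} (η : Fin L → Bool) (ℓ₀ : Fin L) :
    (Finset.univ.filter (fun ℓ => Function.update η ℓ₀ false ℓ = true)) =
      (Finset.univ.filter (fun ℓ => η ℓ = true)).erase ℓ₀ := by
  ext ℓ
  by_cases h : ℓ = ℓ₀ <;> simp [Function.update_apply, h]

lemma exists_both {L : ℕ} (ξ η : Fin L → Bool) (ℓ₀ : Fin L) (hℓ : η ℓ₀ = true) :
    ∃ π : Equiv.Perm (Fin L), IsExistenceAssignment ξ η π ∧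
      IsExistenceAssignment ξ (Function.update η ℓ₀ false) π := by
  classical
  set A := Finset.univ.filter (fun ℓ => η ℓ = true) with hA
  set B := Finset.univ.filter (fun ℓ => ξ ℓ = true) with hB
  have hℓ₀A : ℓ₀ ∈ A := by simp [hA, hℓ]
  have hA' : (Finset.univ.filter (fun ℓ => Function.update η ℓ₀ false ℓ = true)) = A.erase ℓ₀ :=
    filter_update_false η ℓ₀
  have hcard' : normOne (Function.update η ℓ₀ false) = normOne η - 1 := by
    unfold normOne
    rw [hA', Finset.card_erase_of_mem hℓ₀A]
  by_cases hcase : normOne η ≤ normOne ξ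
  · obtain ⟨π, hπ⟩ := perm_maps A B hcase
    have hmem : ∀ ℓ, η ℓ = true → ξ (π ℓ) = true := by
      intro ℓ h
      have : π ℓ ∈ B := hπ ℓ (by simp [hA, h])
      simpa [hB] using this
    refine ⟨π, ?_, ?_⟩
    · unfold IsExistenceAssignment
      rw [if_pos hcase]
      exact hmem
    · unfold IsExistenceAssignment
      rw [if_pos (le_trans (hcard' ▸ Nat.sub_le _ _) hcase)]
      intro ℓ h
      rcases eq_or_ne ℓ ℓ₀ with rfl | hne
      · simp at h
      · rw [Function.update_of_ne hne] at h
        exact hmem ℓ h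
  · push_neg at hcase
    have hBA' : B.card ≤ (A.erase ℓ₀).card := by
      rw [Finset.card_erase_of_mem hℓ₀A]
      exact Nat.le_sub_one_of_lt hcase
    obtain ⟨σ, hσ⟩ := perm_maps B (A.erase ℓ₀) hBA'
    have hkey : ∀ ℓ, ξ (σ.symm ℓ) = true → ℓ ∈ A.erase ℓ₀ := by
      intro ℓ h
      have hb : σ.symm ℓ ∈ B := by simp [hB, h]
      have := hσ _ hb
      simpa using this
    refine ⟨σ.symm, ?_, ?_⟩
    · unfold IsExistenceAssignment
      rw [if_neg (not_le.2 hcase)]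
      intro ℓ h
      have := Finset.mem_of_mem_erase (hkey ℓ h)
      simpa [hA] using this
    · unfold IsExistenceAssignment
      by_cases h2 : normOne (Function.update η ℓ₀ false) ≤ normOne ξ
      · rw [if_pos h2]
        -- then the cards are equal and σ '' B = A.erase ℓ₀
        have hcardB : B.card = (A.erase ℓ₀).card := by
          refine le_antisymm hBA' ?_
          have : (A.erase ℓ₀).card = normOne (Function.update η ℓ₀ false) := by
            unfold normOne; rw [hA']
          rw [this]
          exact h2
        have himg : B.image σ = A.erase ℓ₀ := by
          apply Finset.eq_of_subset_of_card_le
          · intro x hx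
            obtain ⟨b, hb, rfl⟩ := Finset.mem_image.1 hx
            exact hσ b hb
          · rw [Finset.card_image_of_injective _ σ.injective]
            exact hcardB.ge
        intro ℓ h
        have hmem : ℓ ∈ A.erase ℓ₀ := by
          have : ℓ ∈ Finset.univ.filter (fun ℓ => Function.update η ℓ₀ false ℓ = true) := by
            simp [h]
          rwa [hA'] at this
        rw [← himg] at hmem
        obtain ⟨b, hb, hσb⟩ := Finset.mem_image.1 hmem
        have : σ.symm ℓ = b := by rw [← hσb]; exact σ.symm_apply_apply b
        rw [this]
        simpa [hB] using hb
      · rw [if_neg h2]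
        intro ℓ h
        have hmem : ℓ ∈ A.erase ℓ₀ := hkey ℓ h
        have : ℓ ∈ Finset.univ.filter (fun ℓ => Function.update η ℓ₀ false ℓ = true) := by
          rwa [hA']
        simpa using this

lemma chain_omega {L N : ℕ} (ξ : Fin N → Fin L → Bool) (η : Fin L → Bool)
    (ω ω' : Fin N → Equiv.Perm (Fin L))
    (h : ∀ n, IsExistenceAssignment (ξ n) η (ω n))
    (h' : ∀ n, IsExistenceAssignment (ξ n) η (ω' n)) :
    Relation.ReflTransGen (ElementaryMove ξ) (η, ω) (η, ω') := by
  have key : ∀ m : ℕ, Relation.ReflTransGen (ElementaryMove ξ) (η, ω)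
      (η, fun n => if n.val < m then ω' n else ω n) := by
    intro m
    induction m with
    | zero => exact Relation.ReflTransGen.refl
    | succ m ih =>
      by_cases hm : m < N
      · refine ih.tail ?_
        refine ⟨?_, ?_, Or.inr ⟨rfl, ⟨m, hm⟩, ?_⟩⟩
        · intro n; dsimp only; split
          · exact h' n
          · exact h n
        · intro n; dsimp only; split
          · exact h' n
          · exact h n
        · intro n hn
          have hnm : n.val ≠ m := fun hc => hn (Fin.ext hc)
          dsimp only
          rcases Nat.lt_or_ge n.val m with h1 | h1
          · simp [h1, Nat.lt_succ_of_lt h1]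
          · have h2 : ¬ n.val < m := not_lt.2 h1
            have h3 : ¬ n.val < m + 1 := by omega
            simp [h2, h3]
      · have heq : (fun n : Fin N => if n.val < m + 1 then ω' n else ω n)
            = (fun n : Fin N => if n.val < m then ω' n else ω n) := by
          funext n
          have h1 : n.val < m := lt_of_lt_of_le n.isLt (not_lt.1 hm)
          simp [h1, Nat.lt_succ_of_lt h1]
        rw [heq]; exact ih
  have := key N
  have heq : (fun n : Fin N => if n.val < N then ω' n else ω n) = ω' := by
    funext n; simp [n.isLt]
  rwa [heq] at this

lemma to_zero {L N : ℕ} (ξ : Fin N → Fin L → Bool) :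
    ∀ k (s : (Fin L → Bool) × (Fin N → Equiv.Perm (Fin L))), normOne s.1 = k →
      ValidState ξ s →
      Relation.ReflTransGen (ElementaryMove ξ) s ((fun _ => false), (fun _ => 1)) := by
  intro k
  induction k with
  | zero =>
    rintro ⟨η, ω⟩ h0 hv
    have hη : η = fun _ => false := by
      funext ℓ
      by_contra hc
      have hℓ : η ℓ = true := by
        cases hη : η ℓ
        · exact absurd hη hc
        · rfl
      have : ℓ ∈ Finset.univ.filter (fun ℓ => η ℓ = true) := by simp [hℓ]
      rw [Finset.card_eq_zero.1 h0] at this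
      exact absurd this (Finset.notMem_empty ℓ)
    subst hη
    exact chain_omega ξ _ ω _ (fun n => hv n) (fun n => isEA_zero (ξ n) 1)
  | succ k ih =>
    rintro ⟨η, ω⟩ h0 hv
    replace h0 : normOne η = k + 1 := h0
    unfold normOne at h0
    have hne : (Finset.univ.filter (fun ℓ => η ℓ = true)).Nonempty := by
      rw [← Finset.card_pos, h0]; omega
    obtain ⟨ℓ₀, hℓ₀⟩ := hne
    have hℓ₀ : η ℓ₀ = true := (Finset.mem_filter.1 hℓ₀).2
    set η' := Function.update η ℓ₀ false with hη'
    have hcard' : normOne η' = k := by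
      unfold normOne
      rw [hη', filter_update_false η ℓ₀,
        Finset.card_erase_of_mem (by simp [hℓ₀])]
      omega
    choose π hπ hπ' using fun n => exists_both (ξ n) η ℓ₀ hℓ₀
    have hvπ : ValidState ξ (η, π) := fun n => hπ n
    have hvπ' : ValidState ξ (η', π) := fun n => hπ' n
    have step1 : Relation.ReflTransGen (ElementaryMove ξ) (η, ω) (η, π) :=
      chain_omega ξ η ω π (fun n => hv n) hπ
    have step2 : ElementaryMove ξ (η, π) (η', π) := by
      refine ⟨hvπ, hvπ', Or.inl ⟨ℓ₀, ?_, ?_, rfl⟩⟩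
      · simp [hη', hℓ₀]
      · intro ℓ hℓ
        simp [hη', Function.update_of_ne hℓ]
    exact step1.trans ((Relation.ReflTransGen.single step2).trans (ih (η', π) hcard' hvπ'))

/-- Irreducibility of the Gibbs sampler state space: any valid state can be transformed
into any other valid state by a finite sequence of elementary moves passing only
through valid states. -/
theorem gibbs_state_space_irreducible {L N : ℕ} (hL : 1 ≤ L) (hN : 1 ≤ N)
    (ξ : Fin N → Fin L → Bool)
    (s s' : (Fin L → Bool) × (Fin N → Equiv.Perm (Fin L)))
    (hs : ValidState ξ s) (hs' : ValidState ξ s') :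
    Relation.ReflTransGen (ElementaryMove ξ) s s' := by
  have h1 := to_zero ξ (normOne s.1) s rfl hs
  have h2 := to_zero ξ (normOne s'.1) s' rfl hs'
  have h2' : Relation.ReflTransGen (ElementaryMove ξ) ((fun _ => false), (fun _ => 1)) s' :=
    (@Relation.ReflTransGen.stdSymm _ (ElementaryMove ξ) ⟨fun _ _ => em_symm ξ⟩).symm _ _ h2
  exact h1.trans h2'
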